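/- Let X be a smooth separated finite-type scheme over an algebraically closed field, U ⊆ X a dense open subset, and (X, X̄) a good partial compactification (X open in smooth X̄ with X̄ ∖ X a strict normal crossings divisor). Then there exists an open subset Ū ⊆ X̄ containing all generic points of X̄ ∖ X such that Ū ∩ X ⊆ U; in particular (U ∩ Ū, Ū) is a good partial compactification of an open subset of U and codim_{X̄}(X̄ ∖ (X ∪ Ū)) ≥ 2. -/

import Mathlib

open AlgebraicGeometry TopologicalSpace

private lemma key_aux {α : Type*} [TopologicalSpace α] [NoetherianSpace α]
    {U A : Set α} (hUopen : IsOpen U) (hUdense : Dense U) (hAU : ∀ x ∈ A, x ∉ U)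
    (T : IrreducibleCloseds α) (hTZ : (T : Set α) ⊆ closure A)
    (hTA : ∀ x ∈ (T : Set α), x ∉ A) :
    2 ≤ Order.coheight T := by
  classical
  set Z : Set α := closure A with hZdef
  have hZclosed : IsClosed Z := isClosed_closure
  have hZU : ∀ x ∈ Z, x ∉ U := by
    intro x hxZ hxU
    have hx : x ∈ closure (U ∩ A) := hUopen.inter_closure ⟨hxU, hxZ⟩
    have : U ∩ A = ∅ := Set.eq_empty_of_forall_notMem fun y hy => hAU y hy.2 hy.1
    rw [this, closure_empty] at hx
    exact hx
  -- images of irreducible components of the subspace Z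
  let F : Set (Set α) := (fun C : Set Z => ((↑) : Z → α) '' C) '' irreducibleComponents Z
  have hFfin : F.Finite := NoetherianSpace.finite_irreducibleComponents.image _
  have hFclosed : ∀ W ∈ F, IsClosed W := by
    rintro _ ⟨C, hC, rfl⟩
    exact hZclosed.isClosedEmbedding_subtypeVal.isClosedMap _
      (isClosed_of_mem_irreducibleComponents _ hC)
  have hFirr : ∀ W ∈ F, IsIrreducible W := by
    rintro _ ⟨C, hC, rfl⟩
    exact hC.1.image _ continuous_subtype_val.continuousOn
  have hFsubZ : ∀ W ∈ F, W ⊆ Z := by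
    rintro _ ⟨C, hC, rfl⟩ _ ⟨z, _, rfl⟩
    exact z.2
  have hAF : A ⊆ ⋃ W ∈ F, (A ∩ W) := by
    intro a ha
    have haZ : a ∈ Z := subset_closure ha
    refine Set.mem_biUnion (x := ((↑) : Z → α) '' irreducibleComponent (⟨a, haZ⟩ : Z)) ?_ ?_
    · exact ⟨_, irreducibleComponent_mem_irreducibleComponents _, rfl⟩
    · exact ⟨ha, ⟨_, mem_irreducibleComponent, rfl⟩⟩
  have hAeq : A = ⋃ W ∈ F, (A ∩ W) := by
    refine Set.Subset.antisymm hAF ?_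
    intro x hx
    simp only [Set.mem_iUnion] at hx
    obtain ⟨W, _, hxW, _⟩ := hx
    exact hxW
  have hZsub : Z ⊆ ⋃ W ∈ F, closure (A ∩ W) := by
    have h1 : closure (⋃ W ∈ F, (A ∩ W)) = ⋃ W ∈ F, closure (A ∩ W) :=
      hFfin.closure_biUnion _
    rw [hZdef]
    conv_lhs => rw [hAeq]
    exact h1.subset
  -- find one component whose piece contains T
  let G : Set (Set α) := (fun W => closure (A ∩ W)) '' F
  have hGfin : G.Finite := hFfin.image _
  have hTG : (T : Set α) ⊆ ⋃₀ G := by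
    refine (hTZ.trans hZsub).trans ?_
    intro x hx
    simp only [Set.mem_iUnion] at hx
    obtain ⟨W, hW, hx⟩ := hx
    exact ⟨closure (A ∩ W), ⟨W, hW, rfl⟩, hx⟩
  obtain ⟨g, hgG, hTg⟩ :=
    isIrreducible_iff_sUnion_isClosed.mp T.isIrreducible' hGfin.toFinset
      (by
        intro z hz
        rw [Set.Finite.mem_toFinset] at hz
        obtain ⟨W, _, rfl⟩ := hz
        exact isClosed_closure)
      (by rwa [Set.Finite.coe_toFinset])
  rw [Set.Finite.mem_toFinset] at hgG
  obtain ⟨W, hWF, rfl⟩ := hgG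
  have hclW : closure (A ∩ W) ⊆ W := closure_minimal Set.inter_subset_right (hFclosed W hWF)
  have hTW : (T : Set α) ⊆ W := hTg.trans hclW
  have hAWne : (A ∩ W).Nonempty := by
    rw [← closure_nonempty_iff]
    exact T.isIrreducible'.nonempty.mono hTg
  obtain ⟨a, haA, haW⟩ := hAWne
  -- the ambient irreducible component containing W
  obtain ⟨M, hMpre, hWM, hMmax⟩ := exists_preirreducible W (hFirr W hWF).2
  have hMirr : IsIrreducible M := ⟨(hFirr W hWF).nonempty.mono hWM, hMpre⟩
  have hMclosed : IsClosed M := by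
    rw [← closure_eq_iff_isClosed]
    exact hMmax _ hMirr.closure.2 subset_closure
  have hMcomp : M ∈ irreducibleComponents α :=
    ⟨hMirr, fun u hu hMu => (hMmax u hu.2 hMu).le⟩
  obtain ⟨o, ho_open, ho_ne, hoM⟩ :=
    NoetherianSpace.exists_isOpen_nonempty_subset_irreducibleComponent M hMcomp
  obtain ⟨u, huo, huU⟩ := (hUdense.inter_open_nonempty o ho_open
    ho_ne)
  -- build the chain T < W < M
  let Wc : IrreducibleCloseds α := ⟨W, hFirr W hWF, hFclosed W hWF⟩
  let Mc : IrreducibleCloseds α := ⟨M, hMirr, hMclosed⟩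
  have hTltW : T < Wc := by
    refine lt_of_le_of_ne hTW ?_
    intro h
    have : a ∈ (T : Set α) := by rw [congrArg SetLike.coe h]; exact haW
    exact hTA a this haA
  have hWltM : Wc < Mc := by
    refine lt_of_le_of_ne hWM ?_
    intro h
    have huW : u ∈ W := by
      show u ∈ (Wc : Set α)
      rw [congrArg SetLike.coe h]
      exact hoM huo
    exact hZU u (hFsubZ W hWF huW) huU
  let p : LTSeries (IrreducibleCloseds α) :=
    ((RelSeries.singleton _ T).snoc Wc (by simpa using hTltW)).snoc Mc
      (by simpa using hWltM)
  have hhead : p.head = T := by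
    simp [p, RelSeries.head_snoc, RelSeries.head_singleton]
  have hlen : p.length = 2 := by
    simp [p, RelSeries.snoc_length, RelSeries.singleton_length]
  have := Order.length_le_coheight (x := T) (p := p) (le_of_eq hhead.symm)
  rw [hlen] at this
  exact_mod_cast this

/-- Let `X̄` be a smooth separated finite-type scheme over an algebraically
closed field `k`, `X ⊆ X̄` open with complement (the support of a strict normal
crossings divisor, in particular) of pure codimension one, i.e. a good partial
compactification `(X, X̄)`, and let `U ⊆ X` be a dense open subset.  Then there
is an open `Ū ⊆ X̄` containing all generic points of `X̄ ∖ X` with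
`Ū ∩ X ⊆ U`; in particular `(U ∩ Ū, Ū)` is a good partial compactification and
`codim_{X̄}(X̄ ∖ (X ∪ Ū)) ≥ 2`. -/
theorem good_partial_compactification_shrink
    (k : Type*) [Field k] [IsAlgClosed k]
    (Xbar : Scheme) (f : Xbar ⟶ Spec (CommRingCat.of k))
    [Smooth f] [IsSeparated f] [LocallyOfFiniteType f] [QuasiCompact f]
    (X U : Xbar.Opens) (hUX : U ≤ X) (hU : Dense (U : Set Xbar))
    (hdiv : ∀ T : IrreducibleCloseds Xbar, (T : Set Xbar) ⊆ (X : Set Xbar)ᶜ →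
      (∀ T' : IrreducibleCloseds Xbar, (T' : Set Xbar) ⊆ (X : Set Xbar)ᶜ →
        T ≤ T' → T = T') →
      Order.coheight T = 1) :
    ∃ Ubar : Xbar.Opens,
      -- `Ū` contains all generic points of the components of `X̄ ∖ X`
      (∀ T : IrreducibleCloseds Xbar, (T : Set Xbar) ⊆ (X : Set Xbar)ᶜ →
        (∀ T' : IrreducibleCloseds Xbar, (T' : Set Xbar) ⊆ (X : Set Xbar)ᶜ →
          T ≤ T' → T = T') →
        ∀ η : Xbar, IsGenericPoint η (T : Set Xbar) → η ∈ Ubar) ∧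
      -- `Ū ∩ X ⊆ U`
      ((Ubar : Set Xbar) ∩ (X : Set Xbar) ⊆ (U : Set Xbar)) ∧
      -- `codim_{X̄}(X̄ ∖ (X ∪ Ū)) ≥ 2`
      (∀ T : IrreducibleCloseds Xbar,
        (T : Set Xbar) ⊆ ((X : Set Xbar) ∪ (Ubar : Set Xbar))ᶜ →
        2 ≤ Order.coheight T) := by
  -- `Xbar` is a Noetherian scheme, hence a Noetherian topological space
  haveI : IsNoetherianRing (CommRingCat.of k) := by
    show IsNoetherianRing k; infer_instance
  haveI hLN : IsLocallyNoetherian Xbar := by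
    constructor
    intro V
    have hFT : (f.appLE ⊤ V.1 le_top).hom.FiniteType :=
      f.finiteType_appLE (isAffineOpen_top _) V.2 le_top
    have hNoeth : IsNoetherianRing Γ(Spec (CommRingCat.of k), ⊤) :=
      IsLocallyNoetherian.component_noetherian
        ⟨⊤, isAffineOpen_top (Spec (CommRingCat.of k))⟩
    letI : Algebra Γ(Spec (CommRingCat.of k), ⊤) Γ(Xbar, V.1) :=
      (f.appLE ⊤ V.1 le_top).hom.toAlgebra
    haveI : Algebra.FiniteType Γ(Spec (CommRingCat.of k), ⊤) Γ(Xbar, V.1) := hFT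
    exact Algebra.FiniteType.isNoetherianRing Γ(Spec (CommRingCat.of k), ⊤) Γ(Xbar, V.1)
  haveI : CompactSpace Xbar := QuasiCompact.compactSpace_of_compactSpace f
  haveI : IsNoetherian Xbar := ⟨⟩
  haveI : NoetherianSpace Xbar := inferInstance
  -- the construction
  set A : Set Xbar := (X : Set Xbar) \ (U : Set Xbar) with hA
  have hAU : ∀ x ∈ A, x ∉ (U : Set Xbar) := fun x hx => hx.2
  refine ⟨⟨(closure A)ᶜ, isClosed_closure.isOpen_compl⟩, ?_, ?_, ?_⟩
  · -- generic points of components of `Xbar \ X` avoid `closure A`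
    intro T hT hTmax η hη
    show η ∈ (closure A)ᶜ
    intro hηZ
    have hTZ : (T : Set Xbar) ⊆ closure A := by
      rw [← hη]
      exact closure_minimal (Set.singleton_subset_iff.mpr hηZ) isClosed_closure
    have h2 := key_aux U.isOpen hU hAU T hTZ
      (fun x hx hxA => hT hx hxA.1)
    rw [hdiv T hT hTmax] at h2
    exact absurd h2 (by norm_num)
  · -- `Ubar ∩ X ⊆ U`
    rintro x ⟨hxZ, hxX⟩
    by_contra hxU
    exact hxZ (subset_closure ⟨hxX, hxU⟩)
  · -- codimension ≥ 2
    intro T hT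
    have hTX : (T : Set Xbar) ⊆ (X : Set Xbar)ᶜ := fun x hx =>
      fun hxX => hT hx (Or.inl hxX)
    have hTZ : (T : Set Xbar) ⊆ closure A := fun x hx => by
      by_contra hc
      exact hT hx (Or.inr hc)
    exact key_aux U.isOpen hU hAU T hTZ (fun x hx hxA => hTX hx hxA.1)
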